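/- Let k ≥ 2, let ℒ be a volume-one metric structure on the wedge of k circles with volume entropy h_ℒ, and let f : (0,∞) → (0,∞) be a monotone non-increasing function with limsup_{x→∞} f(x)^{1/x} < e^{−h_ℒ}. Then C_f(ℒ) = Σ_{w ∈ 𝒞_k} f(ℓ_ℒ(w)) < ∞. -/

import Mathlib

open Filter Topology
open scoped ENNReal

namespace McShane

/-- The ℒ-weighted length of the freely reduced form of `g`: the sum of `L i`
over all occurrences of `aᵢ^{±1}` in the reduced word of `g`. -/
noncomputable def wlen {k : ℕ} (L : Fin k → ℝ) (g : FreeGroup (Fin k)) : ℝ :=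
  ((FreeGroup.toWord g).map fun x => L x.1).sum

/-- The hyperbolic length of a conjugacy class: the infimum of the ℒ-weighted
lengths of its representatives. For positive edge lengths this equals
`∑ mᵢ·L i` where `mᵢ` counts occurrences of `aᵢ^{±1}` in the cyclically reduced form. -/
noncomputable def hlen {k : ℕ} (L : Fin k → ℝ) (c : ConjClasses (FreeGroup (Fin k))) : ℝ :=
  sInf (wlen L '' c.carrier)

/-- The open simplex `Δ_k` of volume-one metric structures on the wedge of `k` circles. -/
def simplex (k : ℕ) : Set (Fin k → ℝ) :=
  {L | (∀ i, 0 < L i) ∧ ∑ i, L i = 1}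

/-- The barycentric point `ℒ* = (1/k, …, 1/k)`. -/
noncomputable def Lstar (k : ℕ) : Fin k → ℝ := fun _ => 1 / k

/-- `g` is primitive iff it belongs to some free basis of the free group,
equivalently it is the image of a basis element under an automorphism. -/
def IsPrimitive {k : ℕ} (g : FreeGroup (Fin k)) : Prop :=
  ∃ (e : FreeGroup (Fin k) ≃* FreeGroup (Fin k)) (i : Fin k), e (FreeGroup.of i) = g

/-- `C_f(ℒ) = ∑_{w ∈ 𝒞_k} f(ℓ_ℒ(w))`, the sum over all nontrivial conjugacy classes. -/
noncomputable def Cf {k : ℕ} (f : ℝ → ℝ) (L : Fin k → ℝ) : ℝ≥0∞ :=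
  ∑' c : {c : ConjClasses (FreeGroup (Fin k)) // c ≠ 1}, ENNReal.ofReal (f (hlen L c.1))

/-- `P_f(ℒ) = ∑_{w ∈ 𝒫_k} f(ℓ_ℒ(w))`, the sum over conjugacy classes of primitive elements. -/
noncomputable def Pf {k : ℕ} (f : ℝ → ℝ) (L : Fin k → ℝ) : ℝ≥0∞ :=
  ∑' c : {c : ConjClasses (FreeGroup (Fin k)) // ∃ g, IsPrimitive g ∧ ConjClasses.mk g = c},
    ENNReal.ofReal (f (hlen L c.1))

private lemma list_sum_ge {α : Type*} (Lf : α → ℝ) (m : ℝ) (hm : ∀ a, m ≤ Lf a) :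
    ∀ l : List α, m * l.length ≤ (l.map Lf).sum := by
  intro l
  induction l with
  | nil => simp
  | cons a t ih =>
    simp only [List.map_cons, List.sum_cons, List.length_cons]
    push_cast
    rw [mul_add, mul_one]
    linarith [hm a]

set_option maxHeartbeats 1000000 in
/-- If `L ∈ Δ_k` has volume entropy `h` and `f` is positive, non-increasing with
`limsup_{x→∞} f(x)^{1/x} < e^{−h}`, then `C_f(L) < ∞`. -/
theorem mcshane_stmt9 (k : ℕ) (hk : 2 ≤ k) (L : Fin k → ℝ) (hL : L ∈ simplex k)
    (h : ℝ)
    (hent : Tendsto (fun R : ℝ =>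
        Real.log (Nat.card {g : FreeGroup (Fin k) // wlen L g ≤ R}) / R) atTop (𝓝 h))
    (f : ℝ → ℝ)
    (hf_pos : ∀ x > (0:ℝ), 0 < f x)
    (hf_anti : AntitoneOn f (Set.Ioi 0))
    (hf_limsup : limsup (fun x : ℝ => f x ^ (1 / x)) atTop < Real.exp (-h)) :
    Cf f L < ⊤ := by
  classical
  obtain ⟨hLpos, -⟩ := hL
  have hk0 : 0 < k := by omega
  obtain ⟨i0, -, hi0⟩ := Finset.exists_min_image (Finset.univ : Finset (Fin k)) L
    ⟨⟨0, hk0⟩, Finset.mem_univ _⟩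
  set m : ℝ := L i0 with hm_def
  have hm : 0 < m := hLpos i0
  have hmle : ∀ i, m ≤ L i := fun i => hi0 i (Finset.mem_univ i)
  -- basic wlen facts
  have hwlen_ge : ∀ g : FreeGroup (Fin k), m * (FreeGroup.toWord g).length ≤ wlen L g := by
    intro g
    unfold wlen
    exact list_sum_ge (fun x : Fin k × Bool => L x.1) m (fun a => hmle a.1) (FreeGroup.toWord g)
  have hwlen_nonneg : ∀ g : FreeGroup (Fin k), 0 ≤ wlen L g := by
    intro g
    have := list_sum_ge (fun x : Fin k × Bool => L x.1) 0 (fun a => (hLpos a.1).le)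
      (FreeGroup.toWord g)
    simpa [wlen] using this
  have hwlen_ne : ∀ g : FreeGroup (Fin k), g ≠ 1 → m ≤ wlen L g := by
    intro g hg
    have hlen1 : 1 ≤ (FreeGroup.toWord g).length := by
      rcases Nat.eq_zero_or_pos (FreeGroup.toWord g).length with h0 | h1
      · exact absurd (FreeGroup.toWord_eq_nil_iff.1 (List.length_eq_zero_iff.1 h0)) hg
      · exact h1
    calc m = m * 1 := (mul_one m).symm
      _ ≤ m * (FreeGroup.toWord g).length := by
          apply mul_le_mul_of_nonneg_left _ hm.le; exact_mod_cast hlen1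
      _ ≤ wlen L g := hwlen_ge g
  -- finiteness of balls
  have hfin : ∀ R : ℝ, {g : FreeGroup (Fin k) | wlen L g ≤ R}.Finite := by
    intro R
    apply Set.Finite.subset (Set.Finite.preimage FreeGroup.toWord_injective.injOn
      (List.finite_length_le (Fin k × Bool) ⌈R / m⌉₊))
    intro g hg
    simp only [Set.mem_setOf_eq] at hg
    simp only [Set.mem_preimage, Set.mem_setOf_eq]
    have h1 : ((FreeGroup.toWord g).length : ℝ) ≤ R / m := by
      rw [le_div_iff₀ hm]
      have := hwlen_ge g
      linarith
    exact_mod_cast h1.trans (Nat.le_ceil _)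
  -- hlen lower bound
  have hcar : ∀ c : ConjClasses (FreeGroup (Fin k)), c ≠ 1 → m ≤ hlen L c := by
    intro c hc
    obtain ⟨g0, hg0⟩ := ConjClasses.exists_rep c
    have hne : wlen L g0 ∈ wlen L '' c.carrier :=
      ⟨g0, ConjClasses.mem_carrier_iff_mk_eq.2 hg0, rfl⟩
    refine le_csInf ⟨_, hne⟩ ?_
    rintro x ⟨g, hg, rfl⟩
    refine hwlen_ne g fun h1 => hc ?_
    rw [← ConjClasses.mem_carrier_iff_mk_eq.1 hg, h1]
    exact ConjClasses.one_eq_mk_one.symm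
  -- near-minimizing representatives
  have key : ∀ c : {c : ConjClasses (FreeGroup (Fin k)) // c ≠ 1},
      ∃ g : FreeGroup (Fin k), ConjClasses.mk g = c.1 ∧ wlen L g - 1 ≤ hlen L c.1 := by
    intro c
    obtain ⟨g0, hg0⟩ := ConjClasses.exists_rep c.1
    have hne : (wlen L '' c.1.carrier).Nonempty :=
      ⟨wlen L g0, ⟨g0, ConjClasses.mem_carrier_iff_mk_eq.2 hg0, rfl⟩⟩
    obtain ⟨x, ⟨g, hg, rfl⟩, hx⟩ := Real.lt_sInf_add_pos hne one_pos
    refine ⟨g, ConjClasses.mem_carrier_iff_mk_eq.1 hg, ?_⟩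
    unfold hlen
    linarith
  choose G hG1 hG2 using key
  have Ginj : Function.Injective G := by
    intro c c' hcc
    apply Subtype.ext
    rw [← hG1 c, ← hG1 c', hcc]
  -- the comparison function
  set F : FreeGroup (Fin k) → ℝ≥0∞ :=
    fun g => ENNReal.ofReal (f (max m (wlen L g - 1))) with hF
  have step1 : Cf f L ≤ ∑' g : FreeGroup (Fin k), F g := by
    calc Cf f L ≤ ∑' c : {c : ConjClasses (FreeGroup (Fin k)) // c ≠ 1}, F (G c) := by
          apply ENNReal.tsum_le_tsum
          intro c
          apply ENNReal.ofReal_le_ofReal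
          apply hf_anti
          · exact Set.mem_Ioi.2 (lt_of_lt_of_le hm (le_max_left _ _))
          · exact Set.mem_Ioi.2 (lt_of_lt_of_le hm (hcar c.1 c.2))
          · exact max_le (hcar c.1 c.2) (hG2 c)
      _ ≤ ∑' g, F g := ENNReal.tsum_comp_le_tsum_of_injective Ginj F
  -- boundedness of u
  set u : ℝ → ℝ := fun x => f x ^ (1 / x) with hu
  have hbdd : IsBoundedUnder (· ≤ ·) atTop u := by
    refine ⟨max (f 1) 1, ?_⟩
    rw [eventually_map]
    filter_upwards [eventually_ge_atTop (1:ℝ)] with x hx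
    have hx0 : (0:ℝ) < x := lt_of_lt_of_le one_pos hx
    have hfx : 0 < f x := hf_pos x hx0
    rcases le_or_gt (f x) 1 with h1 | h1
    · exact le_trans (Real.rpow_le_one hfx.le h1 (by positivity)) (le_max_right _ _)
    · calc u x ≤ f x ^ (1:ℝ) :=
            Real.rpow_le_rpow_of_exponent_le h1.le (by rw [div_le_one hx0]; linarith)
        _ = f x := Real.rpow_one _
        _ ≤ max (f 1) 1 :=
            le_max_of_le_left (hf_anti (Set.mem_Ioi.2 one_pos) (Set.mem_Ioi.2 hx0) hx)
  -- choose ρ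
  set ρ : ℝ := max ((limsup u atTop + Real.exp (-h)) / 2) (Real.exp (-h) / 2) with hρ_def
  have hexp : 0 < Real.exp (-h) := Real.exp_pos _
  have hρ0 : 0 < ρ := lt_of_lt_of_le (by positivity) (le_max_right _ _)
  have hρlt : ρ < Real.exp (-h) := max_lt (by linarith [hf_limsup]) (by linarith)
  have hlim : limsup u atTop < ρ :=
    lt_of_lt_of_le (by linarith [hf_limsup]) (le_max_left _ _)
  have hev : ∀ᶠ x in atTop, u x < ρ := eventually_lt_of_limsup_lt hlim hbdd
  rw [eventually_atTop] at hev
  obtain ⟨X0, hX0⟩ := hev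
  have hfle : ∀ x : ℝ, max X0 1 ≤ x → f x ≤ ρ ^ x := by
    intro x hx
    have hx1 : (1:ℝ) ≤ x := le_trans (le_max_right _ _) hx
    have hx0 : (0:ℝ) < x := lt_of_lt_of_le one_pos hx1
    have h1 : f x ^ (1/x) < ρ := hX0 x (le_trans (le_max_left _ _) hx)
    have hfx : 0 < f x := hf_pos x hx0
    have h2 : (f x ^ (1/x)) ^ x < ρ ^ x := Real.rpow_lt_rpow (by positivity) h1 hx0
    have heq : (f x ^ (1/x)) ^ x = f x := by
      rw [← Real.rpow_mul hfx.le, one_div, inv_mul_cancel₀ hx0.ne', Real.rpow_one]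
    linarith [heq ▸ h2]
  -- choose ε and geometric ratio r
  have hlogρ : Real.log ρ < -h := (Real.log_lt_iff_lt_exp hρ0).2 hρlt
  set ε : ℝ := (-h - Real.log ρ) / 2 with hε_def
  have hε : 0 < ε := by rw [hε_def]; linarith
  set r : ℝ := Real.exp (h + ε) * ρ with hr_def
  have hr0 : 0 < r := by positivity
  have hr1 : r < 1 := by
    have hre : r = Real.exp (h + ε + Real.log ρ) := by
      rw [Real.exp_add, Real.exp_log hρ0]
    rw [hre, ← Real.exp_zero]
    apply Real.exp_lt_exp.2
    rw [hε_def]; linarith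
  -- counting bound
  set N : ℝ → ℕ := fun R => Nat.card {g : FreeGroup (Fin k) // wlen L g ≤ R} with hN_def
  have hNent : ∀ᶠ R in atTop, Real.log (N R) / R < h + ε :=
    hent.eventually_lt_const (by linarith)
  rw [eventually_atTop] at hNent
  obtain ⟨R1, hR1⟩ := hNent
  have hNbound : ∀ R : ℝ, max R1 1 ≤ R → (N R : ℝ) ≤ Real.exp ((h + ε) * R) := by
    intro R hR
    have hRpos : (0:ℝ) < R := lt_of_lt_of_le one_pos (le_trans (le_max_right _ _) hR)
    haveI : Finite {g : FreeGroup (Fin k) // wlen L g ≤ R} := (hfin R).to_subtype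
    haveI : Nonempty {g : FreeGroup (Fin k) // wlen L g ≤ R} :=
      ⟨⟨1, by unfold wlen; rw [FreeGroup.toWord_one]; simpa using hRpos.le⟩⟩
    have hN1 : 0 < N R := Nat.card_pos
    have hNR : (0:ℝ) < (N R : ℝ) := by exact_mod_cast hN1
    have h2 : Real.log (N R) < (h + ε) * R :=
      (div_lt_iff₀ hRpos).1 (hR1 R (le_trans (le_max_left _ _) hR))
    calc (N R : ℝ) = Real.exp (Real.log (N R)) := (Real.exp_log hNR).symm
      _ ≤ Real.exp ((h + ε) * R) := Real.exp_le_exp.2 h2.le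
  -- fiberwise decomposition
  set φ : FreeGroup (Fin k) → ℕ := fun g => ⌈wlen L g⌉₊ with hφ_def
  set a : ℕ → ℝ≥0∞ := fun n => ∑' g : φ ⁻¹' {n}, F g with ha_def
  have hdecomp : ∑' g, F g = ∑' n : ℕ, a n := (ENNReal.tsum_fiberwise F φ).symm
  -- fiber facts
  have hceil_lb : ∀ (g : FreeGroup (Fin k)) (n : ℕ), φ g = n → (n:ℝ) - 1 ≤ wlen L g := by
    intro g n hg
    rcases n with _ | p
    · simp only [Nat.cast_zero]
      linarith [hwlen_nonneg g]
    · by_contra hlt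
      push_neg at hlt
      have hple : wlen L g ≤ (p:ℝ) := by push_cast at hlt; linarith
      have : φ g ≤ p := Nat.ceil_le.2 hple
      omega
  have hsub : ∀ n : ℕ, φ ⁻¹' {n} ⊆ {g : FreeGroup (Fin k) | wlen L g ≤ (n:ℝ)} := by
    intro n g hg
    simp only [Set.mem_preimage, Set.mem_singleton_iff] at hg
    simp only [Set.mem_setOf_eq]
    calc wlen L g ≤ (φ g : ℝ) := Nat.le_ceil _
      _ = (n : ℝ) := by exact_mod_cast hg
  -- shell bound
  have hshell : ∀ (n : ℕ) (C : ℝ≥0∞), (∀ g : FreeGroup (Fin k), φ g = n → F g ≤ C) →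
      a n ≤ (N (n:ℝ) : ℝ≥0∞) * C := by
    intro n C hC
    have hfinn : (φ ⁻¹' {n}).Finite := (hfin (n:ℝ)).subset (hsub n)
    haveI hfint : Fintype (φ ⁻¹' {n}) := hfinn.fintype
    have hcard : Fintype.card (φ ⁻¹' {n}) ≤ N (n:ℝ) := by
      rw [← Nat.card_eq_fintype_card]
      exact Nat.card_mono (hfin (n:ℝ)) (hsub n)
    calc a n = ∑ g : φ ⁻¹' {n}, F g := tsum_fintype _
      _ ≤ ∑ _g : φ ⁻¹' {n}, C := Finset.sum_le_sum fun g _ => hC g.1 g.2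
      _ = (Fintype.card (φ ⁻¹' {n}) : ℝ≥0∞) * C := by
          rw [Finset.sum_const, Finset.card_univ, nsmul_eq_mul]
      _ ≤ (N (n:ℝ) : ℝ≥0∞) * C := by
          apply mul_le_mul_left
          exact_mod_cast hcard
  -- per-shell constant bound
  have hCle : ∀ n : ℕ, ∀ g : FreeGroup (Fin k), φ g = n →
      F g ≤ ENNReal.ofReal (f (max m ((n:ℝ) - 2))) := by
    intro n g hg
    apply ENNReal.ofReal_le_ofReal
    apply hf_anti
    · exact Set.mem_Ioi.2 (lt_of_lt_of_le hm (le_max_left _ _))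
    · exact Set.mem_Ioi.2 (lt_of_lt_of_le hm (le_max_left _ _))
    · exact max_le_max le_rfl (by linarith [hceil_lb g n hg])
  -- every shell is finite
  have ha_lt_top : ∀ n : ℕ, a n < ⊤ := by
    intro n
    refine lt_of_le_of_lt (hshell n (ENNReal.ofReal (f (max m ((n:ℝ) - 2)))) (hCle n)) ?_
    exact ENNReal.mul_lt_top (ENNReal.natCast_lt_top _) ENNReal.ofReal_lt_top
  -- threshold
  obtain ⟨N2, hN2⟩ := exists_nat_ge (max X0 1 + max R1 1 + m + 3)
  have hmax1 : (1:ℝ) ≤ max X0 1 := le_max_right _ _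
  have hmax2 : (1:ℝ) ≤ max R1 1 := le_max_right _ _
  -- tail bound
  have htail_bound : ∀ n : ℕ, N2 ≤ n →
      a n ≤ ENNReal.ofReal (ρ ^ (-2:ℝ)) * ENNReal.ofReal r ^ n := by
    intro n hn
    have hnR : (N2:ℝ) ≤ (n:ℝ) := by exact_mod_cast hn
    have hn3 : max X0 1 + max R1 1 + m + 3 ≤ (n:ℝ) := le_trans hN2 hnR
    have hmaxeq : max m ((n:ℝ) - 2) = (n:ℝ) - 2 := max_eq_right (by linarith)
    have h1 : f ((n:ℝ) - 2) ≤ ρ ^ ((n:ℝ) - 2) := hfle _ (by linarith)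
    have h2 : (N (n:ℝ) : ℝ) ≤ Real.exp ((h + ε) * (n:ℝ)) := hNbound _ (by linarith)
    have hstep : a n ≤ (N (n:ℝ) : ℝ≥0∞) * ENNReal.ofReal (ρ ^ ((n:ℝ) - 2)) := by
      have := hshell n (ENNReal.ofReal (f (max m ((n:ℝ) - 2)))) (hCle n)
      refine le_trans this (mul_le_mul_right (ENNReal.ofReal_le_ofReal ?_) _)
      rw [hmaxeq]; exact h1
    have hNcast : (N (n:ℝ) : ℝ≥0∞) ≤ ENNReal.ofReal (Real.exp ((h + ε) * (n:ℝ))) := by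
      rw [← ENNReal.ofReal_natCast (N (n:ℝ))]
      exact ENNReal.ofReal_le_ofReal h2
    have hmul : a n ≤ ENNReal.ofReal (Real.exp ((h + ε) * (n:ℝ)) * ρ ^ ((n:ℝ) - 2)) := by
      rw [ENNReal.ofReal_mul (Real.exp_nonneg _)]
      exact le_trans hstep (mul_le_mul_left hNcast _)
    refine le_trans hmul (le_of_eq ?_)
    have hsplit : Real.exp ((h + ε) * (n:ℝ)) * ρ ^ ((n:ℝ) - 2) = ρ ^ (-2:ℝ) * r ^ n := by
      have e1 : ((n:ℝ) - 2) = (n:ℝ) + (-2:ℝ) := by ring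
      rw [e1, Real.rpow_add hρ0, Real.rpow_natCast, mul_comm (h+ε) (n:ℝ),
        Real.exp_nat_mul, hr_def, mul_pow]
      ring
    rw [hsplit, ENNReal.ofReal_mul (Real.rpow_nonneg hρ0.le _),
      ENNReal.ofReal_pow hr0.le]
  -- geometric sum
  have hgeom : ∑' n : ℕ, ENNReal.ofReal r ^ n < ⊤ := by
    rw [ENNReal.tsum_geometric]
    refine ENNReal.inv_lt_top.2 ?_
    rw [tsub_pos_iff_lt]
    exact ENNReal.ofReal_lt_one.2 hr1
  -- conclude by comparison with a splittable majorant
  set b : ℕ → ℝ≥0∞ := fun n =>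
    (if n < N2 then a n else 0) + ENNReal.ofReal (ρ ^ (-2:ℝ)) * ENNReal.ofReal r ^ n
    with hb_def
  have hab : ∀ n : ℕ, a n ≤ b n := by
    intro n
    by_cases hn : n < N2
    · simp only [hb_def, if_pos hn]
      exact le_self_add
    · simp only [hb_def, if_neg hn]
      exact le_add_self.trans
        (add_le_add_right (htail_bound n (not_lt.1 hn)) _)
  have hsum_b : ∑' n : ℕ, b n =
      (∑' n : ℕ, if n < N2 then a n else 0) +
        ENNReal.ofReal (ρ ^ (-2:ℝ)) * ∑' n : ℕ, ENNReal.ofReal r ^ n := by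
    rw [hb_def, ENNReal.tsum_add, ENNReal.tsum_mul_left]
  have hhead_eq : (∑' n : ℕ, if n < N2 then a n else 0) =
      ∑ n ∈ Finset.range N2, (if n < N2 then a n else 0) := by
    apply tsum_eq_sum
    intro n hn
    rw [Finset.mem_range] at hn
    simp [hn]
  have hhead_lt : (∑' n : ℕ, if n < N2 then a n else 0) < ⊤ := by
    rw [hhead_eq]
    refine ENNReal.sum_lt_top.2 fun n _ => ?_
    split
    · exact ha_lt_top n
    · exact ENNReal.zero_lt_top
  have hconc : ∑' n : ℕ, a n < ⊤ := by
    refine lt_of_le_of_lt (ENNReal.tsum_le_tsum hab) ?_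
    rw [hsum_b]
    exact ENNReal.add_lt_top.2
      ⟨hhead_lt, ENNReal.mul_lt_top ENNReal.ofReal_lt_top hgeom⟩
  exact lt_of_le_of_lt step1 (hdecomp ▸ hconc)

end McShane
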